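/- Hessian identity for the reparameterized cost: for any symmetric positive definite Σ ∈ ℝ^{n×n}, any L, L̃ ∈ ℝ^{(m+n)×n}, and any symmetric Σ̃ ∈ ℝ^{n×n}, the second directional derivative of f at (L, Σ) along (L̃, Σ̃), i.e. (d²/dτ²)f(L + τL̃, Σ + τΣ̃)|_{τ=0}, equals 2‖R^{1/2}(Ū₀L̃ − Ū₀LΣ⁻¹Σ̃)Σ^{-1/2}‖_F², and in particular is nonnegative. -/

import Mathlib

open Matrix

noncomputable section

/-- Euclidean norm of a vector. -/
def eNorm {ι : Type*} [Fintype ι] (v : ι → ℝ) : ℝ :=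
  Real.sqrt (∑ i, v i ^ 2)

/-- Frobenius norm of a matrix. -/
def frobNorm {ι κ : Type*} [Fintype ι] [Fintype κ] (A : Matrix ι κ ℝ) : ℝ :=
  Real.sqrt (∑ i, ∑ j, A i j ^ 2)

/-- Spectral (operator 2-) norm of a matrix. -/
def spNorm {ι κ : Type*} [Fintype ι] [Fintype κ] (A : Matrix ι κ ℝ) : ℝ :=
  sSup {r : ℝ | ∃ v : κ → ℝ, eNorm v = 1 ∧ r = eNorm (A.mulVec v)}

/-- Smallest singular value of a matrix `A`, i.e. the square root of the smallest
eigenvalue of `A * Aᵀ`, expressed as `inf_{‖u‖ = 1} ‖Aᵀ u‖`. -/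
def sigMin {ι κ : Type*} [Fintype ι] [Fintype κ] (A : Matrix ι κ ℝ) : ℝ :=
  sInf {r : ℝ | ∃ u : ι → ℝ, eNorm u = 1 ∧ r = eNorm (A.vecMul u)}

/-- `ρ(A) < 1` : the spectral radius of the real square matrix `A` (i.e. the
largest modulus of a complex eigenvalue) is smaller than one. -/
def specLt1 {ι : Type*} [Fintype ι] [DecidableEq ι] (A : Matrix ι ι ℝ) : Prop :=
  spectralRadius ℂ (A.map Complex.ofReal) < 1

/-- Right inverse `M† = Mᵀ (M Mᵀ)⁻¹` of a full-row-rank matrix. -/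
def pinv {ι κ : Type*} [Fintype ι] [Fintype κ] [DecidableEq ι] (A : Matrix ι κ ℝ) :
    Matrix κ ι ℝ :=
  Aᵀ * (A * Aᵀ)⁻¹

/-- Orthogonal projection `Π_A = I - A† A` onto the nullspace of `A`. -/
def projNull {ι κ : Type*} [Fintype ι] [Fintype κ] [DecidableEq ι] [DecidableEq κ]
    (A : Matrix ι κ ℝ) : Matrix κ κ ℝ :=
  1 - pinv A * A

/-- `Σ(M) = ∑_{i≥0} Mⁱ (Mᵀ)ⁱ`, the unique solution of the discrete Lyapunov
equation `Σ = I + M Σ Mᵀ` when `ρ(M) < 1`. -/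
def lyap {k : ℕ} (M : Matrix (Fin k) (Fin k) ℝ) : Matrix (Fin k) (Fin k) ℝ :=
  ∑' i : ℕ, M ^ i * (Mᵀ) ^ i

variable {n m t : ℕ}

/-- Stacked data matrix `D₀ = [U₀; X₀]`. -/
def Dmat (U0 : Matrix (Fin m) (Fin t) ℝ) (X0 : Matrix (Fin n) (Fin t) ℝ) :
    Matrix (Fin m ⊕ Fin n) (Fin t) ℝ :=
  Matrix.fromRows U0 X0

/-- `Ū₀ = (1/t) U₀ D₀ᵀ`. -/
def Ubar (U0 : Matrix (Fin m) (Fin t) ℝ) (X0 : Matrix (Fin n) (Fin t) ℝ) :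
    Matrix (Fin m) (Fin m ⊕ Fin n) ℝ :=
  (t : ℝ)⁻¹ • (U0 * (Dmat U0 X0)ᵀ)

/-- `X̄₀ = (1/t) X₀ D₀ᵀ`. -/
def Xbar0 (U0 : Matrix (Fin m) (Fin t) ℝ) (X0 : Matrix (Fin n) (Fin t) ℝ) :
    Matrix (Fin n) (Fin m ⊕ Fin n) ℝ :=
  (t : ℝ)⁻¹ • (X0 * (Dmat U0 X0)ᵀ)

/-- `X̄₁ = (1/t) X₁ D₀ᵀ`. -/
def Xbar1 (U0 : Matrix (Fin m) (Fin t) ℝ) (X0 X1 : Matrix (Fin n) (Fin t) ℝ) :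
    Matrix (Fin n) (Fin m ⊕ Fin n) ℝ :=
  (t : ℝ)⁻¹ • (X1 * (Dmat U0 X0)ᵀ)

/-- Sample covariance `Φ = (1/t) D₀ D₀ᵀ`. -/
def Phi (U0 : Matrix (Fin m) (Fin t) ℝ) (X0 : Matrix (Fin n) (Fin t) ℝ) :
    Matrix (Fin m ⊕ Fin n) (Fin m ⊕ Fin n) ℝ :=
  (t : ℝ)⁻¹ • (Dmat U0 X0 * (Dmat U0 X0)ᵀ)

/-- The feasible set `S = {V : X̄₀ V = I, ρ(X̄₁ V) < 1}`. -/
def feasSet (U0 : Matrix (Fin m) (Fin t) ℝ) (X0 X1 : Matrix (Fin n) (Fin t) ℝ) :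
    Set (Matrix (Fin m ⊕ Fin n) (Fin n) ℝ) :=
  {V | Xbar0 U0 X0 * V = 1 ∧ specLt1 (Xbar1 U0 X0 X1 * V)}

/-- The closed-loop Lyapunov solution `Σ_V`, i.e. the unique solution of
`Σ_V = I + (X̄₁ V) Σ_V (X̄₁ V)ᵀ` when `V ∈ S`. -/
def SigV (U0 : Matrix (Fin m) (Fin t) ℝ) (X0 X1 : Matrix (Fin n) (Fin t) ℝ)
    (V : Matrix (Fin m ⊕ Fin n) (Fin n) ℝ) : Matrix (Fin n) (Fin n) ℝ :=
  lyap (Xbar1 U0 X0 X1 * V)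

/-- `P_V`, the unique solution of `P = Q + Vᵀ Ū₀ᵀ R Ū₀ V + (X̄₁V)ᵀ P (X̄₁V)`
when `V ∈ S`, given by its convergent series. -/
def PV (U0 : Matrix (Fin m) (Fin t) ℝ) (X0 X1 : Matrix (Fin n) (Fin t) ℝ)
    (Q : Matrix (Fin n) (Fin n) ℝ) (R : Matrix (Fin m) (Fin m) ℝ)
    (V : Matrix (Fin m ⊕ Fin n) (Fin n) ℝ) : Matrix (Fin n) (Fin n) ℝ :=
  ∑' i : ℕ, ((Xbar1 U0 X0 X1 * V)ᵀ) ^ i *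
      (Q + Vᵀ * (Ubar U0 X0)ᵀ * R * Ubar U0 X0 * V) * (Xbar1 U0 X0 X1 * V) ^ i

/-- The covariance-parameterized LQR cost `J(V)`. -/
def Jcost (U0 : Matrix (Fin m) (Fin t) ℝ) (X0 X1 : Matrix (Fin n) (Fin t) ℝ)
    (Q : Matrix (Fin n) (Fin n) ℝ) (R : Matrix (Fin m) (Fin m) ℝ)
    (V : Matrix (Fin m ⊕ Fin n) (Fin n) ℝ) : ℝ :=
  Matrix.trace ((Q + Vᵀ * (Ubar U0 X0)ᵀ * R * Ubar U0 X0 * V) * SigV U0 X0 X1 V)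

/-- `J* = inf_{V ∈ S} J(V)`. -/
def Jstar (U0 : Matrix (Fin m) (Fin t) ℝ) (X0 X1 : Matrix (Fin n) (Fin t) ℝ)
    (Q : Matrix (Fin n) (Fin n) ℝ) (R : Matrix (Fin m) (Fin m) ℝ) : ℝ :=
  sInf (Jcost U0 X0 X1 Q R '' feasSet U0 X0 X1)

/-- Sublevel set `S(a) = {V ∈ S : J(V) ≤ a}`. -/
def subLevel (U0 : Matrix (Fin m) (Fin t) ℝ) (X0 X1 : Matrix (Fin n) (Fin t) ℝ)
    (Q : Matrix (Fin n) (Fin n) ℝ) (R : Matrix (Fin m) (Fin m) ℝ) (a : ℝ) :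
    Set (Matrix (Fin m ⊕ Fin n) (Fin n) ℝ) :=
  {V | V ∈ feasSet U0 X0 X1 ∧ Jcost U0 X0 X1 Q R V ≤ a}

/-- The gradient `∇J(V) = 2 (Ū₀ᵀ R Ū₀ + X̄₁ᵀ P_V X̄₁) V Σ_V`. -/
def gradJ (U0 : Matrix (Fin m) (Fin t) ℝ) (X0 X1 : Matrix (Fin n) (Fin t) ℝ)
    (Q : Matrix (Fin n) (Fin n) ℝ) (R : Matrix (Fin m) (Fin m) ℝ)
    (V : Matrix (Fin m ⊕ Fin n) (Fin n) ℝ) : Matrix (Fin m ⊕ Fin n) (Fin n) ℝ :=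
  (2 : ℝ) • (((Ubar U0 X0)ᵀ * R * Ubar U0 X0 +
      (Xbar1 U0 X0 X1)ᵀ * PV U0 X0 X1 Q R V * Xbar1 U0 X0 X1) * V * SigV U0 X0 X1 V)

/-- `ξ(a) = ‖Ū₀‖² ‖R‖ + ‖X̄₁‖² a`. -/
def xiC (U0 : Matrix (Fin m) (Fin t) ℝ) (X0 X1 : Matrix (Fin n) (Fin t) ℝ)
    (R : Matrix (Fin m) (Fin m) ℝ) (a : ℝ) : ℝ :=
  spNorm (Ubar U0 X0) ^ 2 * spNorm R + spNorm (Xbar1 U0 X0 X1) ^ 2 * a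

/-- Smoothness constant `l(a)`. -/
def lC (U0 : Matrix (Fin m) (Fin t) ℝ) (X0 X1 : Matrix (Fin n) (Fin t) ℝ)
    (Q : Matrix (Fin n) (Fin n) ℝ) (R : Matrix (Fin m) (Fin m) ℝ) (a : ℝ) : ℝ :=
  4 * a ^ 2 * (xiC U0 X0 X1 R a + a - sigMin Q) * frobNorm (Xbar1 U0 X0 X1) ^ 2 / sigMin Q ^ 2 +
    2 * xiC U0 X0 X1 R a * a / sigMin Q

/-- Gradient-dominance constant `μ(a) = 4a²/(σ̲(Q)^{3/2} σ̲(R)^{1/2} σ̲(Ū₀))`. -/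
def muC (U0 : Matrix (Fin m) (Fin t) ℝ) (X0 : Matrix (Fin n) (Fin t) ℝ)
    (Q : Matrix (Fin n) (Fin n) ℝ) (R : Matrix (Fin m) (Fin m) ℝ) (a : ℝ) : ℝ :=
  4 * a ^ 2 / (Real.sqrt (sigMin Q) ^ 3 * Real.sqrt (sigMin R) * sigMin (Ubar U0 X0))

/-- Reparameterized cost `f(L, Σ) = Tr(QΣ) + Tr(L Σ⁻¹ Lᵀ Ū₀ᵀ R Ū₀)`. -/
def fRep (U0 : Matrix (Fin m) (Fin t) ℝ) (X0 : Matrix (Fin n) (Fin t) ℝ)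
    (Q : Matrix (Fin n) (Fin n) ℝ) (R : Matrix (Fin m) (Fin m) ℝ)
    (L : Matrix (Fin m ⊕ Fin n) (Fin n) ℝ) (Sg : Matrix (Fin n) (Fin n) ℝ) : ℝ :=
  Matrix.trace (Q * Sg) + Matrix.trace (L * Sg⁻¹ * Lᵀ * (Ubar U0 X0)ᵀ * R * Ubar U0 X0)

/-- Feasible set `ℒ` of the convex reparameterization. -/
def repSet (U0 : Matrix (Fin m) (Fin t) ℝ) (X0 X1 : Matrix (Fin n) (Fin t) ℝ) :
    Set (Matrix (Fin m ⊕ Fin n) (Fin n) ℝ × Matrix (Fin n) (Fin n) ℝ) :=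
  {p | p.2.IsSymm ∧ p.2 = Xbar0 U0 X0 * p.1 ∧
    (Matrix.fromBlocks (p.2 - 1) (Xbar1 U0 X0 X1 * p.1)
      ((Xbar1 U0 X0 X1 * p.1)ᵀ) p.2).PosSemidef}

/-- `p(a) = (16a³/(σ̲(Q)²ζ)) (1 + a/σ̲(Q)) (1 + √(a/σ̲(R)))`. -/
def pC (Q : Matrix (Fin n) (Fin n) ℝ) (R : Matrix (Fin m) (Fin m) ℝ) (ζ a : ℝ) : ℝ :=
  16 * a ^ 3 / (sigMin Q ^ 2 * ζ) * (1 + a / sigMin Q) * (1 + Real.sqrt (a / sigMin R))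


section Key
attribute [local instance] Matrix.linftyOpNormedAddCommGroup Matrix.linftyOpNormedRing Matrix.linftyOpNormedAlgebra

attribute [local instance] Matrix.linftyOpNormedAddCommGroup Matrix.linftyOpNormedRing Matrix.linftyOpNormedAlgebra

variable {k : ℕ}

private lemma hasDerivAt_S (Sg St : Matrix (Fin k) (Fin k) ℝ) (τ : ℝ) :
    HasDerivAt (fun τ : ℝ => Sg + τ • St) St τ := by
  exact ((hasDerivAt_id τ).smul_const St).const_add Sg |>.congr_deriv (by simp)

private lemma hasDerivAt_matinv (Sg St : Matrix (Fin k) (Fin k) ℝ) (τ : ℝ)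
    (h : IsUnit (Sg + τ • St)) :
    HasDerivAt (fun τ : ℝ => (Sg + τ • St)⁻¹)
      (-((Sg + τ • St)⁻¹ * St * (Sg + τ • St)⁻¹)) τ := by
  have := (hasFDerivAt_ringInverse (𝕜 := ℝ) h.unit).comp_hasDerivAt τ (hasDerivAt_S Sg St τ)
  rw [show (fun τ : ℝ => (Sg + τ • St)⁻¹) = Ring.inverse ∘ (fun τ : ℝ => Sg + τ • St) from by
    funext x; simp [Matrix.nonsing_inv_eq_ringInverse]]
  exact this.congr_deriv (by simp [mul_assoc, Matrix.nonsing_inv_eq_ringInverse])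

private lemma hasDerivAt_traceM (F : ℝ → Matrix (Fin k) (Fin k) ℝ)
    (F' : Matrix (Fin k) (Fin k) ℝ) (τ : ℝ) (h : HasDerivAt F F' τ) :
    HasDerivAt (fun τ => Matrix.trace (F τ)) F'.trace τ := by
  exact
    ((Matrix.traceLinearMap (Fin k) ℝ ℝ).toContinuousLinearMap.hasFDerivAt
      (x := F τ)).comp_hasDerivAt τ h

private lemma hasDerivAt_N (N0 N1 N2 : Matrix (Fin k) (Fin k) ℝ) (τ : ℝ) :
    HasDerivAt (fun τ : ℝ => N0 + τ • N1 + τ ^ 2 • N2) (N1 + (2 * τ) • N2) τ := by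
  have h1 : HasDerivAt (fun τ : ℝ => N0 + τ • N1) N1 τ := by
    exact ((hasDerivAt_id τ).smul_const N1).const_add N0 |>.congr_deriv (by simp)
  have h2 : HasDerivAt (fun τ : ℝ => τ ^ 2 • N2) ((2 * τ) • N2) τ := by
    exact (hasDerivAt_pow 2 τ).smul_const N2 |>.congr_deriv (by simp)
  exact h1.add h2

private lemma keyDeriv (Sg St N0 N1 N2 Q' : Matrix (Fin k) (Fin k) ℝ) (hSg : IsUnit Sg) :
    iteratedDeriv 2 (fun τ : ℝ =>
        trace (Q' * (Sg + τ • St)) +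
          trace ((Sg + τ • St)⁻¹ * (N0 + τ • N1 + τ ^ 2 • N2))) 0
      = 2 * trace (Sg⁻¹ * St * Sg⁻¹ * St * Sg⁻¹ * N0)
        - 2 * trace (Sg⁻¹ * St * Sg⁻¹ * N1) + 2 * trace (Sg⁻¹ * N2) := by
  set J : ℝ → Matrix (Fin k) (Fin k) ℝ := fun τ => (Sg + τ • St)⁻¹ with hJdef
  set N : ℝ → Matrix (Fin k) (Fin k) ℝ := fun τ => N0 + τ • N1 + τ ^ 2 • N2 with hNdef
  set U : Set ℝ := {τ | IsUnit (Sg + τ • St)} with hUdef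
  have hUopen : IsOpen U := by
    have : Continuous (fun τ : ℝ => Sg + τ • St) := by fun_prop
    exact Units.isOpen.preimage this
  have h0 : (0 : ℝ) ∈ U := by simpa [hUdef] using hSg
  set G : ℝ → ℝ := fun τ =>
    trace (Q' * St) + trace ((-(J τ * St * J τ)) * N τ + J τ * (N1 + (2 * τ) • N2)) with hGdef
  have hg : ∀ τ ∈ U, HasDerivAt (fun τ : ℝ =>
      trace (Q' * (Sg + τ • St)) + trace (J τ * N τ)) (G τ) τ := by
    intro τ hτ
    have h1 : HasDerivAt (fun τ : ℝ => trace (Q' * (Sg + τ • St))) (trace (Q' * St)) τ :=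
      hasDerivAt_traceM _ _ _ ((hasDerivAt_S Sg St τ).const_mul Q')
    have hJ : HasDerivAt J (-(J τ * St * J τ)) τ := hasDerivAt_matinv Sg St τ hτ
    have hN : HasDerivAt N (N1 + (2 * τ) • N2) τ := hasDerivAt_N N0 N1 N2 τ
    have h2 := hasDerivAt_traceM _ _ _ (hJ.mul hN)
    exact h1.add h2
  have hEq : deriv (fun τ : ℝ => trace (Q' * (Sg + τ • St)) + trace (J τ * N τ)) =ᶠ[nhds 0] G :=
    Filter.eventuallyEq_of_mem (hUopen.mem_nhds h0) (fun τ hτ => (hg τ hτ).deriv)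
  -- derivative of G at 0
  have hJ0 : HasDerivAt J (-(Sg⁻¹ * St * Sg⁻¹)) 0 := by
    have := hasDerivAt_matinv Sg St 0 (by simpa using hSg)
    simpa using this
  have hN0 : HasDerivAt N N1 0 := by simpa using hasDerivAt_N N0 N1 N2 0
  have hJval : J 0 = Sg⁻¹ := by simp [hJdef]
  have hNval : N 0 = N0 := by simp [hNdef]
  have h5 : HasDerivAt (fun τ : ℝ => N1 + (2 * τ) • N2) ((2 : ℝ) • N2) 0 := by
    exact (((hasDerivAt_id (0:ℝ)).const_mul 2).smul_const N2).const_add N1 |>.congr_deriv (by simp)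
  have h3 : HasDerivAt (fun τ => (-(J τ * St * J τ)) * N τ)
      ((-((-(Sg⁻¹ * St * Sg⁻¹)) * St * Sg⁻¹ + Sg⁻¹ * St * (-(Sg⁻¹ * St * Sg⁻¹)))) * N0
        + (-(Sg⁻¹ * St * Sg⁻¹)) * N1) 0 := by
    have := (((hJ0.mul_const St).mul hJ0).neg).mul hN0
    exact this.congr_deriv (by simp [hJval, hNval])
  have h4 : HasDerivAt (fun τ => J τ * (N1 + (2 * τ) • N2))
      ((-(Sg⁻¹ * St * Sg⁻¹)) * (N1 + (0:ℝ) • N2) + Sg⁻¹ * ((2 : ℝ) • N2)) 0 := by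
    have := hJ0.mul h5
    exact this.congr_deriv (by simp [hJval])
  set D : Matrix (Fin k) (Fin k) ℝ :=
      ((-((-(Sg⁻¹ * St * Sg⁻¹)) * St * Sg⁻¹ + Sg⁻¹ * St * (-(Sg⁻¹ * St * Sg⁻¹)))) * N0
        + (-(Sg⁻¹ * St * Sg⁻¹)) * N1)
        + ((-(Sg⁻¹ * St * Sg⁻¹)) * (N1 + (0:ℝ) • N2) + Sg⁻¹ * ((2 : ℝ) • N2)) with hDdef
  have hG : HasDerivAt G (trace D) 0 :=
    (hasDerivAt_traceM _ _ _ (h3.add h4)).const_add (trace (Q' * St))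
  have : iteratedDeriv 2 (fun τ : ℝ =>
      trace (Q' * (Sg + τ • St)) + trace (J τ * N τ)) 0 = deriv G 0 := by
    rw [iteratedDeriv_succ, iteratedDeriv_one]
    exact hEq.deriv_eq
  rw [show (fun τ : ℝ => trace (Q' * (Sg + τ • St)) + trace ((Sg + τ • St)⁻¹ *
      (N0 + τ • N1 + τ ^ 2 • N2))) = (fun τ : ℝ =>
      trace (Q' * (Sg + τ • St)) + trace (J τ * N τ)) from rfl, this, hG.deriv, hDdef]
  simp only [Matrix.neg_mul, Matrix.mul_neg, Matrix.add_mul, Matrix.mul_add, Matrix.trace_add,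
    Matrix.trace_neg, Matrix.trace_smul, Matrix.mul_smul, Matrix.smul_mul, neg_neg,
    zero_smul, Matrix.mul_zero, Matrix.zero_mul, Matrix.trace_zero, smul_eq_mul,
    Matrix.mul_assoc]
  ring

end Key

private lemma frob_sq {a b : Type*} [Fintype a] [Fintype b] (X : Matrix a b ℝ) :
    frobNorm X ^ 2 = Matrix.trace (X * Xᵀ) := by
  unfold frobNorm
  rw [Real.sq_sqrt (by positivity)]
  simp [Matrix.trace, Matrix.mul_apply, Matrix.diag, sq]

/-- Hessian identity for the reparameterized cost `f` (proof of Lemma 10):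
the second directional derivative equals
`2‖R^{1/2}(Ū₀L̃ − Ū₀LΣ⁻¹Σ̃)Σ^{-1/2}‖_F²` and in particular is nonnegative. -/
theorem stmt_9 {n m t : ℕ} (hn : 0 < n) (hm : 0 < m) (ht : 0 < t)
    (U0 : Matrix (Fin m) (Fin t) ℝ) (X0 : Matrix (Fin n) (Fin t) ℝ)
    (Q : Matrix (Fin n) (Fin n) ℝ) (R : Matrix (Fin m) (Fin m) ℝ)
    (hQ : Q.PosDef) (hR : R.PosDef)
    (hrank : (Dmat U0 X0).rank = m + n)
    (Sg : Matrix (Fin n) (Fin n) ℝ) (hSg : Sg.PosDef)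
    (L Lt : Matrix (Fin m ⊕ Fin n) (Fin n) ℝ)
    (St : Matrix (Fin n) (Fin n) ℝ) (hSt : St.IsSymm)
    (Rh : Matrix (Fin m) (Fin m) ℝ) (hRh : Rh.PosDef) (hRh2 : Rh * Rh = R)
    (Sh : Matrix (Fin n) (Fin n) ℝ) (hSh : Sh.PosDef) (hSh2 : Sh * Sh = Sg) :
    iteratedDeriv 2 (fun τ : ℝ => fRep U0 X0 Q R (L + τ • Lt) (Sg + τ • St)) 0 =
      2 * frobNorm (Rh * (Ubar U0 X0 * Lt - Ubar U0 X0 * L * Sg⁻¹ * St) * Sh⁻¹) ^ 2 ∧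
    0 ≤ iteratedDeriv 2 (fun τ : ℝ => fRep U0 X0 Q R (L + τ • Lt) (Sg + τ • St)) 0 := by
  have hSgU : IsUnit Sg :=
    (Matrix.isUnit_iff_isUnit_det Sg).mpr (isUnit_iff_ne_zero.mpr (ne_of_gt hSg.det_pos))
  have hRhT : Rhᵀ = Rh := by
    rw [← Matrix.conjTranspose_eq_transpose_of_trivial]; exact hRh.1
  have hShT : Shᵀ = Sh := by
    rw [← Matrix.conjTranspose_eq_transpose_of_trivial]; exact hSh.1
  have hSgT : Sgᵀ = Sg := by
    rw [← Matrix.conjTranspose_eq_transpose_of_trivial]; exact hSg.1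
  have hPT : Sg⁻¹ᵀ = Sg⁻¹ := by rw [Matrix.transpose_nonsing_inv, hSgT]
  have hShiT : Sh⁻¹ᵀ = Sh⁻¹ := by rw [Matrix.transpose_nonsing_inv, hShT]
  have hStT : Stᵀ = St := hSt
  have hSinv : Sh⁻¹ * Sh⁻¹ = Sg⁻¹ := by rw [← Matrix.mul_inv_rev, hSh2]
  have hfold : ∀ {c : Type} [Fintype c] (Z : Matrix (Fin n) c ℝ),
      Sh⁻¹ * (Sh⁻¹ * Z) = Sg⁻¹ * Z := by
    intro c _ Z; rw [← Matrix.mul_assoc, hSinv]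
  have hfun : (fun τ : ℝ => fRep U0 X0 Q R (L + τ • Lt) (Sg + τ • St)) =
      fun τ : ℝ => Matrix.trace (Q * (Sg + τ • St)) +
        Matrix.trace ((Sg + τ • St)⁻¹ *
          ((Lᵀ * ((Ubar U0 X0)ᵀ * R * Ubar U0 X0) * L)
            + τ • (Ltᵀ * ((Ubar U0 X0)ᵀ * R * Ubar U0 X0) * L
                + Lᵀ * ((Ubar U0 X0)ᵀ * R * Ubar U0 X0) * Lt)
            + τ ^ 2 • (Ltᵀ * ((Ubar U0 X0)ᵀ * R * Ubar U0 X0) * Lt))) := by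
    funext τ
    unfold fRep
    congr 1
    rw [show (L + τ • Lt) * (Sg + τ • St)⁻¹ * (L + τ • Lt)ᵀ * (Ubar U0 X0)ᵀ * R * Ubar U0 X0
        = (L + τ • Lt) * ((Sg + τ • St)⁻¹ *
            ((L + τ • Lt)ᵀ * ((Ubar U0 X0)ᵀ * (R * Ubar U0 X0)))) from by
      simp only [Matrix.mul_assoc], Matrix.trace_mul_comm]
    rw [show ((Sg + τ • St)⁻¹ * ((L + τ • Lt)ᵀ * ((Ubar U0 X0)ᵀ * (R * Ubar U0 X0))))
          * (L + τ • Lt)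
        = (Sg + τ • St)⁻¹ * ((L + τ • Lt)ᵀ * ((Ubar U0 X0)ᵀ * (R * (Ubar U0 X0
            * (L + τ • Lt))))) from by simp only [Matrix.mul_assoc]]
    congr 1
    simp only [Matrix.transpose_add, Matrix.transpose_smul, Matrix.add_mul, Matrix.mul_add,
      Matrix.smul_mul, Matrix.mul_smul, smul_smul, Matrix.mul_assoc, sq]
    module
  have hmain : iteratedDeriv 2
      (fun τ : ℝ => fRep U0 X0 Q R (L + τ • Lt) (Sg + τ • St)) 0 =
      2 * frobNorm (Rh * (Ubar U0 X0 * Lt - Ubar U0 X0 * L * Sg⁻¹ * St) * Sh⁻¹) ^ 2 := by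
    rw [hfun, keyDeriv _ _ _ _ _ _ hSgU, frob_sq]
    have e1 : Matrix.trace (Rh * (Ubar U0 X0 * (Lt * (Sg⁻¹ * (Ltᵀ * ((Ubar U0 X0)ᵀ * Rh))))))
        = Matrix.trace (Sg⁻¹ * (Ltᵀ * ((Ubar U0 X0)ᵀ * (R * (Ubar U0 X0 * Lt))))) := by
      rw [Matrix.trace_mul_comm]; simp only [Matrix.mul_assoc]; rw [hRh2]
      rw [Matrix.trace_mul_comm]; simp only [Matrix.mul_assoc]
      rw [Matrix.trace_mul_comm]; simp only [Matrix.mul_assoc]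
    have e2 : Matrix.trace (Rh * (Ubar U0 X0 * (Lt * (Sg⁻¹ *
          (St * (Sg⁻¹ * (Lᵀ * ((Ubar U0 X0)ᵀ * Rh))))))))
        = Matrix.trace (Sg⁻¹ * (St * (Sg⁻¹ * (Lᵀ *
            ((Ubar U0 X0)ᵀ * (R * (Ubar U0 X0 * Lt))))))) := by
      rw [Matrix.trace_mul_comm]; simp only [Matrix.mul_assoc]; rw [hRh2]
      rw [Matrix.trace_mul_comm]; simp only [Matrix.mul_assoc]
      rw [Matrix.trace_mul_comm]; simp only [Matrix.mul_assoc]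
    have e3 : Matrix.trace (Rh * (Ubar U0 X0 * (L * (Sg⁻¹ *
          (St * (Sg⁻¹ * (Ltᵀ * ((Ubar U0 X0)ᵀ * Rh))))))))
        = Matrix.trace (Sg⁻¹ * (St * (Sg⁻¹ * (Ltᵀ *
            ((Ubar U0 X0)ᵀ * (R * (Ubar U0 X0 * L))))))) := by
      rw [Matrix.trace_mul_comm]; simp only [Matrix.mul_assoc]; rw [hRh2]
      rw [Matrix.trace_mul_comm]; simp only [Matrix.mul_assoc]
      rw [Matrix.trace_mul_comm]; simp only [Matrix.mul_assoc]
    have e4 : Matrix.trace (Rh * (Ubar U0 X0 * (L * (Sg⁻¹ * (St * (Sg⁻¹ *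
          (St * (Sg⁻¹ * (Lᵀ * ((Ubar U0 X0)ᵀ * Rh))))))))))
        = Matrix.trace (Sg⁻¹ * (St * (Sg⁻¹ * (St * (Sg⁻¹ * (Lᵀ *
            ((Ubar U0 X0)ᵀ * (R * (Ubar U0 X0 * L))))))))) := by
      rw [Matrix.trace_mul_comm]; simp only [Matrix.mul_assoc]; rw [hRh2]
      rw [Matrix.trace_mul_comm]; simp only [Matrix.mul_assoc]
      rw [Matrix.trace_mul_comm]; simp only [Matrix.mul_assoc]
    simp only [Matrix.sub_mul, Matrix.mul_sub, Matrix.transpose_sub, Matrix.transpose_mul,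
      hRhT, hShiT, hPT, hStT, Matrix.trace_sub, Matrix.trace_add, Matrix.mul_add,
      Matrix.mul_assoc, hfold]
    rw [e1, e2, e3, e4]
    ring
  exact ⟨hmain, by rw [hmain]; positivity⟩
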